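/- Let G be a simple connected graph and for each unordered pair of distinct vertices fix exactly one shortest path (a 'path fixing' F). Let H(G) be the auxiliary graph on E(G) where edges e1, e2 are adjacent iff they both separate a common vertex pair, and let G(A_F) be the graph on E(G) where e1, e2 are adjacent iff both lie on some common path of F. Then H(G) equals the intersection over all path fixings F of the graphs G(A_F). -/

import Mathlib

open SimpleGraph

variable {V : Type*} {C : Type*}

/-- A walk is a shortest path: it is a path whose length equals the distance
between its endpoints. -/
def IsShortestPath (G : SimpleGraph V) {u v : V} (p : G.Walk u v) : Prop :=
  p.IsPath ∧ p.length = G.dist u v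

/-- A walk is rainbow w.r.t. an edge coloring `f` if all of its edges receive
pairwise distinct colors. -/
def IsRainbow {G : SimpleGraph V} (f : Sym2 V → C) {u v : V} (p : G.Walk u v) : Prop :=
  (p.edges.map f).Nodup

/-- An edge `e` separates the vertices `u` and `v` if `e` lies on every
shortest `(u,v)`-path. -/
def EdgeSeparates (G : SimpleGraph V) (e : Sym2 V) (u v : V) : Prop :=
  ∀ p : G.Walk u v, IsShortestPath G p → e ∈ p.edges

/-- A vertex `w` separates the vertices `u` and `v` if `w` is an internal
vertex of every shortest `(u,v)`-path. -/
def VertexSeparates (G : SimpleGraph V) (w u v : V) : Prop :=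
  w ≠ u ∧ w ≠ v ∧ ∀ p : G.Walk u v, IsShortestPath G p → w ∈ p.support

/-- The auxiliary graph `H(G)`: vertices are the edges of `G`, and two edges
are adjacent iff some pair of distinct vertices of `G` is separated by both. -/
def auxGraph (G : SimpleGraph V) : SimpleGraph G.edgeSet where
  Adj e₁ e₂ := e₁ ≠ e₂ ∧
    ∃ u v : V, u ≠ v ∧ EdgeSeparates G e₁.1 u v ∧ EdgeSeparates G e₂.1 u v
  symm := by
    refine ⟨?_⟩
    rintro e₁ e₂ ⟨hne, u, v, huv, h1, h2⟩
    exact ⟨hne.symm, u, v, huv, h2, h1⟩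
  loopless := by refine ⟨?_⟩; rintro e ⟨hne, -⟩; exact hne rfl

/-- An edge coloring strongly rainbow connects `G` if every pair of distinct
vertices is joined by a rainbow shortest path. -/
def StronglyRainbowConnects (G : SimpleGraph V) (f : Sym2 V → C) : Prop :=
  ∀ u v : V, u ≠ v → ∃ p : G.Walk u v, IsShortestPath G p ∧ IsRainbow f p

/-- An edge coloring rainbow connects `G` if every pair of distinct vertices
is joined by a rainbow path. -/
def RainbowConnects (G : SimpleGraph V) (f : Sym2 V → C) : Prop :=
  ∀ u v : V, u ≠ v → ∃ p : G.Walk u v, p.IsPath ∧ IsRainbow f p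

/-- The strong rainbow connection number of `G`. -/
noncomputable def src (G : SimpleGraph V) : ℕ :=
  sInf {k : ℕ | ∃ f : Sym2 V → Fin k, StronglyRainbowConnects G f}

/-- The rainbow connection number of `G`. -/
noncomputable def rc (G : SimpleGraph V) : ℕ :=
  sInf {k : ℕ | ∃ f : Sym2 V → Fin k, RainbowConnects G f}

/-- A path fixing selects one shortest `(u,v)`-path for every ordered pair of
distinct vertices. -/
def PathFixing {V : Type*} (G : SimpleGraph V) : Type _ :=
  ∀ u v : V, u ≠ v → {p : G.Walk u v // IsShortestPath G p}

/-- The graph `G(A_F)` on the edges of `G` associated with a path fixing `F`: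
two edges are adjacent iff both lie on some common fixed path of `F`. -/
def fixingGraph {V : Type*} (G : SimpleGraph V) (F : PathFixing G) :
    SimpleGraph G.edgeSet where
  Adj e₁ e₂ := e₁ ≠ e₂ ∧ ∃ (u v : V) (h : u ≠ v),
    (e₁ : Sym2 V) ∈ (F u v h).1.edges ∧ (e₂ : Sym2 V) ∈ (F u v h).1.edges
  symm := by
    refine ⟨?_⟩
    rintro e₁ e₂ ⟨hne, x, y, h, h1, h2⟩
    exact ⟨hne.symm, x, y, h, h2, h1⟩
  loopless := by refine ⟨?_⟩; rintro e ⟨hne, -⟩; exact hne rfl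

lemma exists_shortest_path {V : Type*} (G : SimpleGraph V) (hG : G.Connected) (u v : V) :
    ∃ p : G.Walk u v, IsShortestPath G p := by
  classical
  obtain ⟨p, hp⟩ := hG.exists_walk_length_eq_dist u v
  refine ⟨p.bypass, p.bypass_isPath, le_antisymm ?_ (G.dist_le _)⟩
  calc p.bypass.length ≤ p.length := p.length_bypass_le
    _ = G.dist u v := hp

/-- The auxiliary graph `H(G)` equals the intersection, over all path fixings
`F`, of the graphs `G(A_F)`. -/
theorem stmt17 {V : Type*} (G : SimpleGraph V) (hG : G.Connected) :
    auxGraph G = ⨅ F : PathFixing G, fixingGraph G F := by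
  classical
  ext e₁ e₂
  simp only [auxGraph, iInf_adj]
  constructor
  · rintro ⟨hne, u, v, huv, h1, h2⟩
    refine ⟨fun F => ⟨hne, u, v, huv, h1 _ (F u v huv).2, h2 _ (F u v huv).2⟩, hne⟩
  · rintro ⟨hall, hne⟩
    refine ⟨hne, ?_⟩
    by_contra hcon
    push_neg at hcon
    have key : ∀ u v : V, u ≠ v → ∃ p : G.Walk u v,
        IsShortestPath G p ∧ (e₁.1 ∉ p.edges ∨ e₂.1 ∉ p.edges) := by
      intro u v h
      by_cases h1 : EdgeSeparates G e₁.1 u v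
      · have h2 : ¬ EdgeSeparates G e₂.1 u v := fun h2 => hcon u v h h1 h2
        simp only [EdgeSeparates, not_forall] at h2
        obtain ⟨p, hp, hmem⟩ := h2
        exact ⟨p, hp, Or.inr hmem⟩
      · simp only [EdgeSeparates, not_forall] at h1
        obtain ⟨p, hp, hmem⟩ := h1
        exact ⟨p, hp, Or.inl hmem⟩
    set F : PathFixing G := fun u v h => ⟨(key u v h).choose, (key u v h).choose_spec.1⟩
      with hF
    obtain ⟨-, u, v, h, hm1, hm2⟩ := hall F
    rcases (key u v h).choose_spec.2 with h' | h'
    · exact h' hm1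
    · exact h' hm2
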